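/- Let a_{l,m} = (2l+4m)! / ((l+m)!·l!·(m!)³) and c_{l,m} = Σ_{j=1}^{2l+4m} 16/j² − Σ_{j=1}^{l+m} 1/j² − Σ_{j=1}^{m} 3/j². If complex λ, μ satisfy 256(|λ|+|μ|) < 1, then |Σ_{l+m≥N+1} a_{l,m}·c_{l,m}·λ^l·μ^m| ≤ (8π²/3)·((4(N+1))!/((N+1)!)^4)·(|λ|+|μ|)^(N+1)/(1 − 256(|λ|+|μ|)) for all natural numbers N. -/

import Mathlib

open Finset

noncomputable def aCoeff (l m : ℕ) : ℝ :=
  ((2 * l + 4 * m).factorial : ℝ) /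
    (((l + m).factorial : ℝ) * (l.factorial : ℝ) * ((m.factorial : ℝ)) ^ 3)

noncomputable def cCoeff (l m : ℕ) : ℝ :=
  (∑ j ∈ Finset.Icc 1 (2 * l + 4 * m), (16 : ℝ) / (j : ℝ) ^ 2) -
    (∑ j ∈ Finset.Icc 1 (l + m), (1 : ℝ) / (j : ℝ) ^ 2) -
    (∑ j ∈ Finset.Icc 1 m, (3 : ℝ) / (j : ℝ) ^ 2)

lemma S_mono {a b : ℕ} (hab : a ≤ b) :
    ∑ j ∈ Icc 1 a, (1:ℝ)/(j:ℝ)^2 ≤ ∑ j ∈ Icc 1 b, (1:ℝ)/(j:ℝ)^2 := by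
  apply sum_le_sum_of_subset_of_nonneg
  · exact Icc_subset_Icc_right hab
  · intro i _ _; positivity

lemma S_nonneg (a : ℕ) : 0 ≤ ∑ j ∈ Icc 1 a, (1:ℝ)/(j:ℝ)^2 := by positivity

lemma S_le_basel (n : ℕ) : ∑ j ∈ Icc 1 n, (1:ℝ)/(j:ℝ)^2 ≤ Real.pi^2/6 := by
  have h1 : ∑ j ∈ Icc 1 n, (1:ℝ)/(j:ℝ)^2 ≤ ∑ j ∈ range (n+1), (1:ℝ)/(j:ℝ)^2 := by
    apply sum_le_sum_of_subset_of_nonneg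
    · intro i hi; simp only [mem_Icc] at hi; simp only [mem_range]; omega
    · intro i _ _; positivity
  exact h1.trans (sum_le_hasSum _ (fun i _ => by positivity) hasSum_zeta_two)

lemma c16 (n : ℕ) : ∑ j ∈ Icc 1 n, (16:ℝ)/(j:ℝ)^2 = 16 * ∑ j ∈ Icc 1 n, (1:ℝ)/(j:ℝ)^2 := by
  rw [mul_sum]; exact sum_congr rfl (fun i _ => by ring)

lemma c3 (n : ℕ) : ∑ j ∈ Icc 1 n, (3:ℝ)/(j:ℝ)^2 = 3 * ∑ j ∈ Icc 1 n, (1:ℝ)/(j:ℝ)^2 := by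
  rw [mul_sum]; exact sum_congr rfl (fun i _ => by ring)

lemma cCoeff_nonneg (l m : ℕ) : 0 ≤ cCoeff l m := by
  unfold cCoeff
  rw [c16, c3]
  have h1 := S_mono (show l + m ≤ 2*l+4*m by omega)
  have h2 := S_mono (show m ≤ 2*l+4*m by omega)
  have h3 := S_nonneg (2*l+4*m)
  linarith

lemma cCoeff_le (l m : ℕ) : cCoeff l m ≤ 8 * Real.pi^2 / 3 := by
  unfold cCoeff
  rw [c16, c3]
  have h1 := S_le_basel (2*l+4*m)
  have h2 := S_nonneg (l+m)
  have h3 := S_nonneg m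
  linarith

lemma aCoeff_nonneg (l m : ℕ) : 0 ≤ aCoeff l m := by
  unfold aCoeff; positivity

lemma fact_key (s d : ℕ) : ∀ m : ℕ,
    (2*s+2*m).factorial * ((m+d).factorial)^2 ≤ (2*s+2*(m+d)).factorial * (m.factorial)^2 := by
  induction d with
  | zero => simp
  | succ d ih =>
    intro m
    have h1 := ih m
    rw [show 2*s+2*(m+(d+1)) = (2*s+2*(m+d))+1+1 from by ring,
        show m + (d+1) = (m+d)+1 from by ring,
        Nat.factorial_succ, Nat.factorial_succ, Nat.factorial_succ]
    have hb : ((m+d)+1)*((m+d)+1) ≤ (2*s+2*(m+d)+1+1)*(2*s+2*(m+d)+1) :=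
      Nat.mul_le_mul (by omega) (by omega)
    calc (2*s+2*m).factorial * (((m+d)+1) * (m+d).factorial)^2
        = (((m+d)+1)*((m+d)+1)) * ((2*s+2*m).factorial * ((m+d).factorial)^2) := by ring
      _ ≤ (((m+d)+1)*((m+d)+1)) * ((2*s+2*(m+d)).factorial * (m.factorial)^2) :=
          Nat.mul_le_mul_left _ h1
      _ ≤ ((2*s+2*(m+d)+1+1)*(2*s+2*(m+d)+1)) * ((2*s+2*(m+d)).factorial * (m.factorial)^2) :=
          Nat.mul_le_mul_right _ hb
      _ = (2*s+2*(m+d)+1+1) * ((2*s+2*(m+d)+1) * (2*s+2*(m+d)).factorial) * m.factorial^2 := by ring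

lemma aCoeff_le (l m : ℕ) :
    aCoeff l m ≤ ((l+m).choose l : ℝ) * (((4*(l+m)).factorial : ℝ) / ((l+m).factorial:ℝ)^4) := by
  have keyN : (2*l+4*m).factorial * ((l+m).factorial)^2 ≤ (4*(l+m)).factorial * (m.factorial)^2 := by
    have := fact_key (l+m) l m
    rw [show 2*(l+m)+2*m = 2*l+4*m from by ring, show m+l = l+m from by ring,
        show 2*(l+m)+2*(l+m) = 4*(l+m) from by ring] at this
    exact this
  have key : ((2*l+4*m).factorial : ℝ) * ((l+m).factorial:ℝ)^2
      ≤ ((4*(l+m)).factorial:ℝ) * ((m.factorial:ℝ))^2 := by exact_mod_cast keyN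
  have hchoose : ((l+m).choose l : ℝ) * (l.factorial:ℝ) * (m.factorial:ℝ) = ((l+m).factorial:ℝ) := by
    have := Nat.choose_mul_factorial_mul_factorial (Nat.le_add_right l m)
    rw [Nat.add_sub_cancel_left] at this
    exact_mod_cast this
  unfold aCoeff
  rw [mul_div_assoc'] -- c * (A/S^4) = (c*A)/S^4
  rw [div_le_div_iff₀ (by positivity) (by positivity)]
  have hS2 : (0:ℝ) ≤ ((l+m).factorial:ℝ)^2 := by positivity
  calc ((2*l+4*m).factorial:ℝ) * ((l+m).factorial:ℝ)^4
      = (((2*l+4*m).factorial:ℝ) * ((l+m).factorial:ℝ)^2) * ((l+m).factorial:ℝ)^2 := by ring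
    _ ≤ (((4*(l+m)).factorial:ℝ) * ((m.factorial:ℝ))^2) * ((l+m).factorial:ℝ)^2 :=
        mul_le_mul_of_nonneg_right key hS2
    _ = ((l+m).choose l : ℝ) * ((4*(l+m)).factorial:ℝ) *
        (((l+m).factorial:ℝ) * (l.factorial:ℝ) * ((m.factorial:ℝ))^3) := by
        rw [← hchoose]; ring

noncomputable def gTail (N : ℕ) (x y : ℝ) (p : ℕ × ℕ) : ℝ :=
  if N + 1 ≤ p.1 + p.2 then
    8 * Real.pi ^ 2 / 3 * (((4 * (N + 1)).factorial : ℝ) / ((N + 1).factorial : ℝ) ^ 4) *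
      256 ^ (p.1 + p.2 - (N + 1)) * (((p.1 + p.2).choose p.1 : ℝ) * x ^ p.1 * y ^ p.2)
  else 0

lemma A_step_nat (s : ℕ) :
    (4*(s+1)).factorial * (s.factorial)^4 ≤ 256 * ((4*s).factorial * ((s+1).factorial)^4) := by
  have h1 : (4*(s+1)).factorial = ((4*s+4)*((4*s+3)*((4*s+2)*(4*s+1)))) * (4*s).factorial := by
    rw [show 4*(s+1) = (4*s+1)+1+1+1 from by ring]
    simp [Nat.factorial_succ]; ring
  have h2 : ((s+1).factorial)^4 = (s+1)^4 * (s.factorial)^4 := by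
    rw [Nat.factorial_succ]; ring
  rw [h1, h2]
  have key : (4*s+4)*((4*s+3)*((4*s+2)*(4*s+1))) ≤ (4*s+4)*((4*s+4)*((4*s+4)*(4*s+4))) := by
    gcongr <;> omega
  have key2 : (4*s+4)*((4*s+4)*((4*s+4)*(4*s+4))) = 256*(s+1)^4 := by ring
  calc ((4*s+4)*((4*s+3)*((4*s+2)*(4*s+1)))) * (4*s).factorial * (s.factorial)^4
      ≤ (256*(s+1)^4) * (4*s).factorial * (s.factorial)^4 :=
        Nat.mul_le_mul_right _ (Nat.mul_le_mul_right _ (key.trans_eq key2))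
    _ = 256 * ((4*s).factorial * ((s+1)^4 * (s.factorial)^4)) := by ring

lemma A_grow (N : ℕ) : ∀ s, N+1 ≤ s →
    ((4*s).factorial:ℝ)/((s).factorial:ℝ)^4 ≤
      (((4*(N+1)).factorial:ℝ)/((N+1).factorial:ℝ)^4) * 256^(s-(N+1)) := by
  intro s hs
  induction s, hs using Nat.le_induction with
  | base => simp
  | succ s hs ih =>
    have hstep : ((4*(s+1)).factorial:ℝ)/((s+1).factorial:ℝ)^4
        ≤ 256 * (((4*s).factorial:ℝ)/(s.factorial:ℝ)^4) := by
      rw [mul_div_assoc']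
      rw [div_le_div_iff₀ (by positivity) (by positivity)]
      exact_mod_cast (A_step_nat s).trans_eq (by ring)
    refine hstep.trans ?_
    calc 256 * (((4*s).factorial:ℝ)/(s.factorial:ℝ)^4)
        ≤ 256 * ((((4*(N+1)).factorial:ℝ)/((N+1).factorial:ℝ)^4) * 256^(s-(N+1))) := by
          gcongr
      _ = (((4*(N+1)).factorial:ℝ)/((N+1).factorial:ℝ)^4) * 256^(s+1-(N+1)) := by
          rw [show s+1-(N+1) = (s-(N+1))+1 from by omega, pow_succ]; ring

lemma gTail_hasSum (N : ℕ) (x y : ℝ) (hx : 0 ≤ x) (hy : 0 ≤ y) (h : 256 * (x + y) < 1) :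
    HasSum (gTail N x y)
      (8 * Real.pi ^ 2 / 3 * (((4 * (N + 1)).factorial : ℝ) / ((N + 1).factorial : ℝ) ^ 4) *
        (x + y) ^ (N + 1) / (1 - 256 * (x + y))) := by
  set C : ℝ := 8 * Real.pi ^ 2 / 3 * (((4 * (N + 1)).factorial : ℝ) / ((N + 1).factorial : ℝ) ^ 4)
    with hC
  have hC0 : 0 ≤ C := by rw [hC]; positivity
  have hq0 : (0:ℝ) ≤ 256 * (x + y) := by positivity
  set T : ℕ → ℝ := fun n => if N+1 ≤ n then C * 256^(n-(N+1)) * (x+y)^n else 0 with hT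
  have hfiber : ∀ n : ℕ, ∑ p ∈ Finset.HasAntidiagonal.antidiagonal n, gTail N x y p = T n := by
    intro n
    rw [Finset.Nat.sum_antidiagonal_eq_sum_range_succ_mk]
    by_cases hn : N+1 ≤ n
    · simp only [hT]
      rw [if_pos hn]
      have hcong : ∀ k ∈ range (n+1), gTail N x y (k, n-k)
          = C * 256^(n-(N+1)) * ((n.choose k : ℝ) * x^k * y^(n-k)) := by
        intro k hk
        rw [mem_range] at hk
        have hkn : k + (n - k) = n := by omega
        simp only [gTail, hkn]
        rw [if_pos hn]
      rw [sum_congr rfl hcong, ← mul_sum]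
      congr 1
      rw [add_pow]
      exact (sum_congr rfl (fun k _ => by ring)).symm
    · simp only [hT]
      rw [if_neg hn]
      apply sum_eq_zero
      intro k hk
      rw [mem_range] at hk
      have hkn : k + (n - k) = n := by omega
      simp only [gTail, hkn]
      rw [if_neg hn]
  have hTshift : ∀ n : ℕ, T (n + (N+1)) = (C * (x+y)^(N+1)) * (256*(x+y))^n := by
    intro n
    simp only [hT]
    rw [if_pos (by omega), show n + (N+1) - (N+1) = n from by omega, pow_add, mul_pow]
    ring
  have hTsummable : Summable T := by
    apply (summable_nat_add_iff (N+1)).mp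
    have := (summable_geometric_of_lt_one hq0 h).mul_left (C * (x+y)^(N+1))
    simpa [hTshift] using this
  have hTsum : ∑' n, T n = C * (x+y)^(N+1) / (1 - 256*(x+y)) := by
    rw [← Summable.sum_add_tsum_nat_add (N+1) hTsummable]
    have h0 : ∑ i ∈ range (N+1), T i = 0 := by
      apply sum_eq_zero
      intro i hi
      rw [mem_range] at hi
      simp only [hT]
      rw [if_neg (by omega)]
    rw [h0, zero_add]
    simp only [hTshift]
    rw [tsum_mul_left, tsum_geometric_of_lt_one hq0 h, div_eq_mul_inv]
  have hg0 : ∀ p : ℕ × ℕ, 0 ≤ gTail N x y p := by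
    intro p
    unfold gTail
    split
    · have : (0:ℝ) ≤ C := hC0
      rw [hC] at this
      positivity
    · exact le_refl 0
  have hsig : Summable (fun z : (Σ n : ℕ, Finset.HasAntidiagonal.antidiagonal n) => gTail N x y z.2) := by
    rw [summable_sigma_of_nonneg (fun _ => hg0 _)]
    constructor
    · intro n; exact (hasSum_fintype _).summable
    · have he : ∀ n : ℕ, ∑' (p : Finset.HasAntidiagonal.antidiagonal n), gTail N x y p = T n := by
        intro n
        rw [tsum_fintype, Finset.sum_coe_sort]
        exact hfiber n
      simpa only [he] using hTsummable
  have hgsummable : Summable (gTail N x y) :=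
    Finset.HasAntidiagonal.sigmaAntidiagonalEquivProd.summable_iff.mp hsig
  have h1 : ∑' (z : Σ n : ℕ, Finset.HasAntidiagonal.antidiagonal n), gTail N x y z.2 = ∑' n, T n := by
    rw [Summable.tsum_sigma' (fun n => (hasSum_fintype _).summable) hsig]
    congr 1
    funext n
    rw [tsum_fintype, Finset.sum_coe_sort]
    exact hfiber n
  have hgsum : ∑' p, gTail N x y p = C * (x+y)^(N+1) / (1 - 256*(x+y)) := by
    rw [← Finset.HasAntidiagonal.sigmaAntidiagonalEquivProd.tsum_eq (gTail N x y)]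
    exact h1.trans hTsum
  have := hgsummable.hasSum
  rwa [hgsum] at this

theorem tail_bound_delta4 (N : ℕ) (lam mu : ℂ)
    (h : 256 * (‖lam‖ + ‖mu‖) < 1) :
    Summable (fun p : ℕ × ℕ =>
      if N + 1 ≤ p.1 + p.2 then (aCoeff p.1 p.2 : ℂ) * (cCoeff p.1 p.2 : ℂ) * lam ^ p.1 * mu ^ p.2
      else 0) ∧
    ‖(∑' p : ℕ × ℕ,
        if N + 1 ≤ p.1 + p.2 then (aCoeff p.1 p.2 : ℂ) * (cCoeff p.1 p.2 : ℂ) * lam ^ p.1 * mu ^ p.2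
        else 0)‖ ≤
      8 * Real.pi ^ 2 / 3 * (((4 * (N + 1)).factorial : ℝ) / ((N + 1).factorial : ℝ) ^ 4) *
        (‖lam‖ + ‖mu‖) ^ (N + 1) /
        (1 - 256 * (‖lam‖ + ‖mu‖)) := by
  have hx : 0 ≤ ‖lam‖ := norm_nonneg lam
  have hy : 0 ≤ ‖mu‖ := norm_nonneg mu
  have hgs := gTail_hasSum N (‖lam‖) (‖mu‖) hx hy h
  set x := ‖lam‖ with hxd
  set y := ‖mu‖ with hyd
  have hbound : ∀ p : ℕ × ℕ,
      ‖(if N + 1 ≤ p.1 + p.2 then (aCoeff p.1 p.2 : ℂ) * (cCoeff p.1 p.2 : ℂ) * lam ^ p.1 * mu ^ p.2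
        else 0)‖ ≤ gTail N x y p := by
    rintro ⟨l, m⟩
    simp only
    by_cases hp : N + 1 ≤ l + m
    · rw [if_pos hp]
      have hnorm : ‖(aCoeff l m : ℂ) * (cCoeff l m : ℂ) * lam ^ l * mu ^ m‖
          = aCoeff l m * cCoeff l m * x ^ l * y ^ m := by
        rw [norm_mul, norm_mul, norm_mul, norm_pow, norm_pow, Complex.norm_real,
          Complex.norm_real, Real.norm_eq_abs, Real.norm_eq_abs,
          abs_of_nonneg (aCoeff_nonneg l m), abs_of_nonneg (cCoeff_nonneg l m)]
      rw [hnorm]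
      simp only [gTail, if_pos hp]
      have hA := A_grow N (l + m) hp
      have h1 : aCoeff l m ≤ ((l+m).choose l : ℝ) *
          ((((4*(N+1)).factorial:ℝ)/((N+1).factorial:ℝ)^4) * 256^(l+m-(N+1))) :=
        (aCoeff_le l m).trans (mul_le_mul_of_nonneg_left hA (by positivity))
      have h2 : aCoeff l m * cCoeff l m ≤
          (((l+m).choose l : ℝ) *
            ((((4*(N+1)).factorial:ℝ)/((N+1).factorial:ℝ)^4) * 256^(l+m-(N+1)))) *
          (8 * Real.pi ^ 2 / 3) :=
        mul_le_mul h1 (cCoeff_le l m) (cCoeff_nonneg l m) (by positivity)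
      calc aCoeff l m * cCoeff l m * x ^ l * y ^ m
          ≤ ((((l+m).choose l : ℝ) *
              ((((4*(N+1)).factorial:ℝ)/((N+1).factorial:ℝ)^4) * 256^(l+m-(N+1)))) *
              (8 * Real.pi ^ 2 / 3)) * x ^ l * y ^ m := by
            apply mul_le_mul_of_nonneg_right _ (by positivity)
            exact mul_le_mul_of_nonneg_right h2 (by positivity)
        _ = 8 * Real.pi ^ 2 / 3 * (((4 * (N + 1)).factorial : ℝ) / ((N + 1).factorial : ℝ) ^ 4) *
              256 ^ (l + m - (N + 1)) * (((l + m).choose l : ℝ) * x ^ l * y ^ m) := by ring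
    · rw [if_neg hp]
      simp [gTail, hp]
  refine ⟨Summable.of_norm_bounded hgs.summable hbound, ?_⟩
  exact tsum_of_norm_bounded hgs hbound
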